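/- For every natural number N and all real numbers μ₁, μ₂ with 0 ≤ μ₁ < μ₂, one has f_N(μ₁) < f_N(μ₂); that is, f_N is strictly increasing on [0, ∞). -/

import Mathlib

open Real

noncomputable def ueTerm (N n : ℕ) (μ : ℝ) : ℝ :=
  if N < n then (μ ^ n / (Nat.factorial n : ℝ)) * Real.exp (-μ) * (((n : ℝ) - (N : ℝ)) / (n : ℝ))
  else 0

noncomputable def ueTerm' (N n : ℕ) (μ : ℝ) : ℝ :=
  if N < n then
    (((n : ℝ) * μ ^ (n - 1) - μ ^ n) / (Nat.factorial n : ℝ)) * Real.exp (-μ) *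
      (((n : ℝ) - (N : ℝ)) / (n : ℝ))
  else 0

lemma c_mem {N n : ℕ} (h : N < n) :
    0 < ((n : ℝ) - (N : ℝ)) / (n : ℝ) ∧ ((n : ℝ) - (N : ℝ)) / (n : ℝ) ≤ 1 := by
  have hn : (0:ℝ) < n := by exact_mod_cast Nat.pos_of_ne_zero (by omega)
  have hNn : (N:ℝ) < n := by exact_mod_cast h
  constructor
  · exact div_pos (by linarith) hn
  · rw [div_le_one hn]; have : (0:ℝ) ≤ N := Nat.cast_nonneg N; linarith

lemma ueTerm_hasDerivAt (N n : ℕ) (μ : ℝ) :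
    HasDerivAt (ueTerm N n) (ueTerm' N n μ) μ := by
  unfold ueTerm ueTerm'
  by_cases h : N < n
  · simp only [h, if_true]
    have h1 : HasDerivAt (fun μ : ℝ => μ ^ n / (Nat.factorial n : ℝ))
        ((n : ℝ) * μ ^ (n - 1) / (Nat.factorial n : ℝ)) μ := by
      simpa [div_eq_mul_inv] using ((hasDerivAt_pow n μ).div_const (Nat.factorial n : ℝ))
    have h2 : HasDerivAt (fun μ : ℝ => Real.exp (-μ)) (-Real.exp (-μ)) μ := by
      simpa [Function.comp_def] using ((Real.hasDerivAt_exp (-μ)).comp μ ((hasDerivAt_id μ).neg))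
    have := (h1.mul h2).mul_const (((n : ℝ) - (N : ℝ)) / (n : ℝ))
    refine this.congr_deriv ?_
    ring
  · simp only [h, if_false]
    exact hasDerivAt_const μ 0

lemma summable_ueTerm (N : ℕ) (μ : ℝ) : Summable (fun n => ueTerm N n μ) := by
  apply Summable.of_norm_bounded (g := fun n => |μ| ^ n / (Nat.factorial n : ℝ) * Real.exp (-μ))
  · exact (Real.summable_pow_div_factorial |μ|).mul_right _
  · intro n
    unfold ueTerm
    by_cases h : N < n
    · simp only [h, if_true, Real.norm_eq_abs]
      rw [abs_mul, abs_mul]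
      have hc := c_mem h
      have : |((n : ℝ) - (N : ℝ)) / (n : ℝ)| ≤ 1 := by
        rw [abs_of_pos hc.1]; exact hc.2
      calc |μ ^ n / (Nat.factorial n : ℝ)| * |Real.exp (-μ)| * |((n : ℝ) - (N : ℝ)) / (n : ℝ)|
          ≤ |μ ^ n / (Nat.factorial n : ℝ)| * |Real.exp (-μ)| * 1 := by
            apply mul_le_mul_of_nonneg_left this (by positivity)
        _ = |μ| ^ n / (Nat.factorial n : ℝ) * Real.exp (-μ) := by
            rw [mul_one, abs_div, abs_pow, Nat.abs_cast, abs_of_pos (Real.exp_pos _)]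
    · simp only [h, if_false, norm_zero]
      positivity

lemma summable_bound (R : ℝ) :
    Summable (fun n : ℕ => (((n : ℝ) * R ^ (n - 1) + R ^ n) / (Nat.factorial n : ℝ)) *
      Real.exp R) := by
  apply Summable.mul_right
  have h1 : Summable (fun n : ℕ => (n : ℝ) * R ^ (n - 1) / (Nat.factorial n : ℝ)) := by
    rw [← summable_nat_add_iff 1]
    have : (fun n : ℕ => ((n + 1 : ℕ) : ℝ) * R ^ ((n + 1) - 1) / (Nat.factorial (n + 1) : ℝ))
        = fun n : ℕ => R ^ n / (Nat.factorial n : ℝ) := by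
      funext n
      rw [Nat.factorial_succ]
      push_cast
      field_simp
    rw [this]
    exact Real.summable_pow_div_factorial R
  have h2 := Real.summable_pow_div_factorial R
  have := h1.add h2
  simpa only [add_div] using this

lemma ueTerm'_bound (N n : ℕ) (R y : ℝ) (hy : |y| ≤ R) :
    ‖ueTerm' N n y‖ ≤ (((n : ℝ) * R ^ (n - 1) + R ^ n) / (Nat.factorial n : ℝ)) * Real.exp R := by
  have hR : 0 ≤ R := le_trans (abs_nonneg y) hy
  unfold ueTerm'
  by_cases h : N < n
  · simp only [h, if_true, Real.norm_eq_abs]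
    rw [abs_mul, abs_mul]
    have hc := c_mem h
    have hc1 : |((n : ℝ) - (N : ℝ)) / (n : ℝ)| ≤ 1 := by
      rw [abs_of_pos hc.1]; exact hc.2
    have he : |Real.exp (-y)| ≤ Real.exp R := by
      rw [abs_of_pos (Real.exp_pos _)]
      apply Real.exp_le_exp.2
      have := neg_abs_le y
      linarith
    have hnum : |((n : ℝ) * y ^ (n - 1) - y ^ n) / (Nat.factorial n : ℝ)|
        ≤ ((n : ℝ) * R ^ (n - 1) + R ^ n) / (Nat.factorial n : ℝ) := by
      rw [abs_div, Nat.abs_cast]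
      apply div_le_div_of_nonneg_right ?_ (by positivity) |>.trans_eq rfl
      calc |(n : ℝ) * y ^ (n - 1) - y ^ n| ≤ |(n : ℝ) * y ^ (n - 1)| + |y ^ n| := abs_sub _ _
        _ = (n : ℝ) * |y| ^ (n - 1) + |y| ^ n := by
            rw [abs_mul, Nat.abs_cast, abs_pow, abs_pow]
        _ ≤ (n : ℝ) * R ^ (n - 1) + R ^ n := by gcongr
    calc |((n : ℝ) * y ^ (n - 1) - y ^ n) / (Nat.factorial n : ℝ)| * |Real.exp (-y)| *
          |((n : ℝ) - (N : ℝ)) / (n : ℝ)|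
        ≤ (((n : ℝ) * R ^ (n - 1) + R ^ n) / (Nat.factorial n : ℝ)) * Real.exp R * 1 := by
          have h1 : (0:ℝ) ≤ ((n : ℝ) * R ^ (n - 1) + R ^ n) / (Nat.factorial n : ℝ) := by
            positivity
          exact mul_le_mul (mul_le_mul hnum he (abs_nonneg _) h1) hc1 (abs_nonneg _)
            (by positivity)
      _ = _ := mul_one _
  · simp only [h, if_false, norm_zero]
    positivity

noncomputable def ueBlockLocal (N : ℕ) (μ : ℝ) : ℝ := ∑' i : ℕ, ueTerm N i μ

lemma ueBlock_hasDerivAt (N : ℕ) (μ : ℝ) :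
    HasDerivAt (ueBlockLocal N) (∑' n, ueTerm' N n μ) μ := by
  set R : ℝ := |μ| + 1 with hR
  have hμmem : μ ∈ Set.Ioo (-R) R := by
    constructor
    · have := neg_abs_le μ; simp only [hR]; linarith
    · have := le_abs_self μ; simp only [hR]; linarith
  exact hasDerivAt_tsum_of_isPreconnected (summable_bound R) isOpen_Ioo
    (convex_Ioo _ _).isPreconnected
    (fun n y _ => ueTerm_hasDerivAt N n y)
    (fun n y hy => ueTerm'_bound N n R y (by
      rw [abs_le]; exact ⟨hy.1.le, hy.2.le⟩))
    hμmem (summable_ueTerm N μ) hμmem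

lemma summable_ueTerm' (N : ℕ) (μ : ℝ) : Summable (fun n => ueTerm' N n μ) :=
  Summable.of_norm_bounded (summable_bound (|μ| + 1))
    (fun n => ueTerm'_bound N n (|μ| + 1) μ (by linarith [abs_nonneg μ]))

lemma deriv_sum_pos (N : ℕ) (μ : ℝ) (hμ : 0 < μ) : 0 < ∑' n, ueTerm' N n μ := by
  set e := Real.exp (-μ) with he
  have hepos : 0 < e := Real.exp_pos _
  set A : ℕ → ℝ := fun n => if N < n then
      ((n : ℝ) * μ ^ (n - 1) / (Nat.factorial n : ℝ)) * e * (((n : ℝ) - (N : ℝ)) / (n : ℝ))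
    else 0 with hAdef
  have hAterm : ∀ n, A n = ueTerm' N n μ + ueTerm N n μ := by
    intro n
    unfold ueTerm' ueTerm
    by_cases h : N < n
    · simp only [hAdef, h, if_true, he]
      ring
    · simp [hAdef, h]
  have hT := summable_ueTerm N μ
  have hT' := summable_ueTerm' N μ
  have hA : Summable A := by
    have := hT'.add hT
    exact this.congr (fun n => (hAterm n).symm)
  set S : ℕ → ℝ := fun n => if N ≤ n then
      (μ ^ n / (Nat.factorial n : ℝ)) * e * (((n : ℝ) + 1 - (N : ℝ)) / ((n : ℝ) + 1))
    else 0 with hSdef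
  have hSA : ∀ n, A (n + 1) = S n := by
    intro n
    simp only [hAdef, hSdef, Nat.lt_succ_iff]
    by_cases h : N ≤ n
    · simp only [h, if_true]
      have hfac : (Nat.factorial (n + 1) : ℝ) = ((n : ℝ) + 1) * (Nat.factorial n : ℝ) := by
        rw [Nat.factorial_succ]; push_cast; ring
      have hfn : (0:ℝ) < (Nat.factorial n : ℝ) := by
        exact_mod_cast Nat.factorial_pos n
      push_cast
      rw [hfac]
      field_simp
    · simp [h]
  have hS : Summable S := by
    have := (summable_nat_add_iff 1).2 hA
    exact this.congr hSA
  have hAS : ∑' n, A n = ∑' n, S n := by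
    rw [hA.tsum_eq_zero_add]
    have hA0 : A 0 = 0 := by simp [hAdef]
    rw [hA0, zero_add]
    exact tsum_congr hSA
  have key : ∑' n, ueTerm' N n μ = ∑' n, (S n - ueTerm N n μ) := by
    have h1 : ∑' n, ueTerm' N n μ = ∑' n, (A n - ueTerm N n μ) := by
      apply tsum_congr
      intro n
      rw [hAterm n]; ring
    rw [h1, hA.tsum_sub hT, hAS, ← hS.tsum_sub hT]
  rw [key]
  have hnonneg : ∀ n, 0 ≤ S n - ueTerm N n μ := by
    intro n
    unfold ueTerm
    simp only [hSdef]
    rcases lt_trichotomy n N with h | h | h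
    · simp [not_le.2 h, Nat.not_lt.2 h.le, ← he]
    · subst h
      simp only [le_refl, if_true, lt_irrefl, if_false, sub_zero]
      have h1 : (0:ℝ) < (n : ℝ) + 1 - (n : ℝ) := by linarith
      have hfn : (0:ℝ) < (Nat.factorial n : ℝ) := by exact_mod_cast Nat.factorial_pos n
      exact le_of_lt (mul_pos (mul_pos (div_pos (pow_pos hμ n) hfn) hepos)
        (div_pos h1 (by positivity)))
    · simp only [h.le, if_true, h, if_true, ← he]
      have hn : (0:ℝ) < n := by exact_mod_cast Nat.pos_of_ne_zero (by omega)
      have hcc : ((n : ℝ) - (N : ℝ)) / (n : ℝ) ≤ ((n : ℝ) + 1 - (N : ℝ)) / ((n : ℝ) + 1) := by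
        rw [div_le_div_iff₀ hn (by linarith)]
        have hN0 : (0:ℝ) ≤ N := Nat.cast_nonneg N
        nlinarith
      have hmp : (0:ℝ) ≤ μ ^ n / (Nat.factorial n : ℝ) * e := by positivity
      nlinarith [mul_le_mul_of_nonneg_left hcc hmp]
  have hposN : 0 < S N - ueTerm N N μ := by
    unfold ueTerm
    simp only [hSdef, le_refl, if_true, lt_irrefl, if_false, sub_zero]
    have h1 : (0:ℝ) < (N : ℝ) + 1 - (N : ℝ) := by linarith
    have hfn : (0:ℝ) < (Nat.factorial N : ℝ) := by exact_mod_cast Nat.factorial_pos N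
    exact mul_pos (mul_pos (div_pos (pow_pos hμ N) hfn) hepos)
      (div_pos h1 (by positivity))
  exact Summable.tsum_pos (hS.sub hT) hnonneg N hposN

/-- The UE access-limited blockage function
`f_N(μ) = Σ_{i=N+1}^{∞} (μ^i / i!) · e^{−μ} · (i − N)/i`. -/
noncomputable def ueBlock (N : ℕ) (μ : ℝ) : ℝ :=
  ∑' i : ℕ, if N < i then
    (μ ^ i / (Nat.factorial i : ℝ)) * Real.exp (-μ) * (((i : ℝ) - (N : ℝ)) / (i : ℝ))
  else 0

/-- `f_N` is strictly increasing on `[0, ∞)`. -/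
theorem stmt4 (N : ℕ) (μ₁ μ₂ : ℝ) (h₀ : 0 ≤ μ₁) (h₁ : μ₁ < μ₂) :
    ueBlock N μ₁ < ueBlock N μ₂ := by
  have hEq : ueBlock N = ueBlockLocal N := rfl
  have hmono : StrictMonoOn (ueBlockLocal N) (Set.Ici 0) := by
    apply strictMonoOn_of_deriv_pos (convex_Ici 0)
    · exact (Differentiable.continuous
        (fun x => (ueBlock_hasDerivAt N x).differentiableAt)).continuousOn
    · intro x hx
      rw [interior_Ici] at hx
      rw [(ueBlock_hasDerivAt N x).deriv]
      exact deriv_sum_pos N x hx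
  rw [hEq]
  exact hmono (Set.mem_Ici.2 h₀) (Set.mem_Ici.2 (h₀.trans h₁.le)) h₁
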